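/- For every natural number k ≥ 1, the abelianization of the group defined by the presentation ⟨d, t | d² = 1, t⁻²d⁻¹td⁻¹t⁻¹dtdt⁻¹dt²d⁻¹ = 1, (t³dt⁻¹d)ᵏ = 1⟩ is isomorphic to the direct product of a cyclic group of order 2 and a cyclic group of order 2k (that is, to Multiplicative (ZMod 2 × ZMod (2k))). -/

import Mathlib

/-- Relators for the presentation
`⟨d, t | d², t⁻²d⁻¹td⁻¹t⁻¹dtdt⁻¹dt²d⁻¹, (t³dt⁻¹d)ᵏ⟩`,
with generators `d = 0`, `t = 1`. -/
def relsDT (k : ℕ) : Set (FreeGroup (Fin 2)) :=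
  let d : FreeGroup (Fin 2) := FreeGroup.of 0
  let t : FreeGroup (Fin 2) := FreeGroup.of 1
  {d ^ 2,
   t⁻¹ * t⁻¹ * d⁻¹ * t * d⁻¹ * t⁻¹ * d * t * d * t⁻¹ * d * t ^ 2 * d⁻¹,
   (t ^ 3 * d * t⁻¹ * d) ^ k}

def φDT (k : ℕ) : Fin 2 → Multiplicative (ZMod 2 × ZMod (2 * k)) :=
  fun i => Multiplicative.ofAdd (if i = 0 then (1, 0) else (1, 1))

lemma φDT_rels (k : ℕ) : ∀ r ∈ relsDT k, FreeGroup.lift (φDT k) r = 1 := by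
  intro r hr
  have h2k : ((2 * k : ℕ) : ZMod (2 * k)) = 0 := ZMod.natCast_self _
  rcases hr with h | h | h <;> subst h <;>
    simp only [map_mul, map_inv, map_pow, FreeGroup.lift_apply_of, φDT,
      if_pos rfl, if_neg (by decide : (1 : Fin 2) ≠ 0),
      ← ofAdd_add, ← ofAdd_neg, ← ofAdd_nsmul, ofAdd_eq_one, Prod.ext_iff,
      Prod.fst_add, Prod.snd_add, Prod.fst_neg, Prod.snd_neg, Prod.smul_fst, Prod.smul_snd, if_true, Prod.fst_zero, Prod.snd_zero]
  · exact ⟨by decide, by norm_num⟩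
  · refine ⟨by decide, ?_⟩
    show (-1 : ZMod (2*k)) + -1 + -0 + 1 + -0 + -1 + 0 + 1 + 0 + -1 + 0 + 2 • 1 + -0 = 0
    norm_num
  · refine ⟨?_, ?_⟩
    · show k • ((3 • 1 : ZMod 2) + 1 + -1 + 1) = 0
      rw [show (3 • 1 : ZMod 2) + 1 + -1 + 1 = 0 by decide, smul_zero]
    · show k • ((3 • 1 : ZMod (2*k)) + 0 + -1 + 0) = 0
      rw [show (3 • 1 : ZMod (2*k)) + 0 + -1 + 0 = 2 by push_cast; ring, nsmul_eq_mul]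
      rw [show ((k : ZMod (2*k)) * 2) = ((2 * k : ℕ) : ZMod (2*k)) by push_cast; ring, h2k]

theorem abelianization_relsDT (k : ℕ) (hk : 1 ≤ k) :
    Nonempty (Abelianization (PresentedGroup (relsDT k)) ≃*
      Multiplicative (ZMod 2 × ZMod (2 * k))) := by
  classical
  set G := PresentedGroup (relsDT k) with hG
  have hrel : ∀ r ∈ relsDT k, PresentedGroup.mk (relsDT k) r = 1 := fun r hr =>
    (QuotientGroup.eq_one_iff _).mpr (Subgroup.subset_normalClosure hr)
  set D : Abelianization G := Abelianization.of (PresentedGroup.of 0) with hD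
  set T : Abelianization G := Abelianization.of (PresentedGroup.of 1) with hT
  have hD2 : D ^ 2 = 1 := by
    have := congrArg (Abelianization.of (G := G)) (hrel _ (Or.inl rfl))
    simpa [hD, PresentedGroup.of] using this
  have hrel3 : (T ^ 3 * D * T⁻¹ * D) ^ k = 1 := by
    have := congrArg (Abelianization.of (G := G))
      (hrel _ (Or.inr (Or.inr rfl)))
    simpa [hD, hT, PresentedGroup.of] using this
  have hDT : (D * T) ^ (2 * k) = 1 := by
    have h1 : T ^ 3 * D * T⁻¹ * D = (D * T) ^ 2 := by
      simp [pow_succ, mul_assoc, mul_comm, mul_left_comm]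
    rw [pow_mul]
    rw [h1] at hrel3
    exact hrel3
  -- the additive elements
  set a : Additive (Abelianization G) := Additive.ofMul D with ha
  set b : Additive (Abelianization G) := Additive.ofMul (D * T) with hb
  have hza : zmultiplesHom _ a (2 : ℤ) = 0 := by
    rw [zmultiplesHom_apply, ha, ← ofMul_zpow,
      show ((2 : ℤ)) = ((2 : ℕ) : ℤ) from rfl, zpow_natCast, hD2]
    rfl
  have hzb : zmultiplesHom _ b ((2 * k : ℕ) : ℤ) = 0 := by
    rw [zmultiplesHom_apply, hb, ← ofMul_zpow, zpow_natCast, hDT]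
    rfl
  set g2 : ZMod 2 →+ Additive (Abelianization G) := ZMod.lift 2 ⟨zmultiplesHom _ a, hza⟩ with hg2
  set gk : ZMod (2 * k) →+ Additive (Abelianization G) :=
    ZMod.lift (2 * k) ⟨zmultiplesHom _ b, hzb⟩ with hgk
  set g : Multiplicative (ZMod 2 × ZMod (2 * k)) →* Abelianization G :=
    AddMonoidHom.toMultiplicativeLeft (g2.coprod gk) with hg
  set f : Abelianization G →* Multiplicative (ZMod 2 × ZMod (2 * k)) :=
    Abelianization.lift (PresentedGroup.toGroup (φDT_rels k)) with hf
  have hfD : f D = Multiplicative.ofAdd (1, 0) := by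
    rw [hf, hD, Abelianization.lift_apply_of, PresentedGroup.toGroup.of]
    simp [φDT]
  have hfT : f T = Multiplicative.ofAdd (1, 1) := by
    rw [hf, hT, Abelianization.lift_apply_of, PresentedGroup.toGroup.of]
    simp [φDT]
  have hgf : g.comp f = MonoidHom.id _ := by
    apply Abelianization.hom_ext
    refine PresentedGroup.ext fun x => ?_
    fin_cases x
    · show g (f D) = D
      rw [hfD]
      show Additive.toMul (g2 1 + gk 0) = D
      have : (1 : ZMod 2) = ((1 : ℤ) : ZMod 2) := by norm_num
      rw [this, map_zero, add_zero, hg2, ZMod.lift_coe]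
      simp [ha]
    · show g (f T) = T
      rw [hfT]
      show Additive.toMul (g2 1 + gk 1) = T
      have e1 : (1 : ZMod 2) = ((1 : ℤ) : ZMod 2) := by norm_num
      have e2 : (1 : ZMod (2 * k)) = ((1 : ℤ) : ZMod (2 * k)) := by norm_num
      rw [e1, e2, hg2, hgk, ZMod.lift_coe, ZMod.lift_coe]
      show Additive.toMul ((1 : ℤ) • a + (1 : ℤ) • b) = T
      simp only [one_zsmul, ha, hb, ← ofMul_mul, toMul_ofMul]
      calc D * (D * T) = D ^ 2 * T := by rw [pow_two, mul_assoc]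
        _ = T := by rw [hD2, one_mul]
  have hfg : ∀ y, f (g y) = y := by
    rintro ⟨x1, x2⟩
    obtain ⟨m, rfl⟩ := ZMod.intCast_surjective x1
    obtain ⟨n, rfl⟩ := ZMod.intCast_surjective x2
    show f (Additive.toMul (g2 ((m : ℤ) : ZMod 2) + gk ((n : ℤ) : ZMod (2 * k)))) = _
    rw [hg2, hgk, ZMod.lift_coe, ZMod.lift_coe]
    show f (Additive.toMul (m • a + n • b)) = _
    simp only [ha, hb, ← ofMul_zpow, ← ofMul_mul, toMul_ofMul, map_mul, map_zpow, hfD, hfT]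
    rw [← ofAdd_add, ← ofAdd_zsmul, ← ofAdd_zsmul, ← ofAdd_add]
    refine congrArg Multiplicative.ofAdd (Prod.ext ?_ ?_)
    · show m • (1 : ZMod 2) + n • ((1 : ZMod 2) + 1) = (m : ZMod 2)
      rw [show (1 : ZMod 2) + 1 = 0 by decide, smul_zero, add_zero, zsmul_one]
    · show m • (0 : ZMod (2 * k)) + n • ((0 : ZMod (2 * k)) + 1) = (n : ZMod (2 * k))
      rw [smul_zero, zero_add, zero_add, zsmul_one]
  exact ⟨{ toFun := f, invFun := g, map_mul' := f.map_mul,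
           left_inv := fun x => DFunLike.congr_fun hgf x,
           right_inv := hfg }⟩
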